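/- Let O and O' be sets on which Sym(Ω) acts, let π : Stacks(O) → Stacks(O') be an injective Sym(Ω)-invariant function, and let U ⊆ Sym(Ω). If U has a perfect refiner with respect to O, then U also has a perfect refiner with respect to O'. -/

import Mathlib

/-- A right action of a group `G` on a type `O`, written exponentially in the paper:
`act o g` is `o ^ g`. -/
structure RAct (G : Type*) [Group G] (O : Type*) where
  act : O → G → O
  act_one : ∀ o : O, act o 1 = o
  act_mul : ∀ (o : O) (g h : G), act o (g * h) = act (act o g) h

namespace RAct

variable {G : Type*} [Group G] {O : Type*}

/-- The induced entrywise right action on stacks (finite lists) with entries in `O`. -/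
def stack (a : RAct G O) : RAct G (List O) where
  act S g := S.map fun o => a.act o g
  act_one S := by
    have h : (fun o => a.act o 1) = id := funext fun o => a.act_one o
    simp [h]
  act_mul S g h := by
    show List.map (fun o => a.act o (g * h)) S = List.map (fun o => a.act o h) (List.map (fun o => a.act o g) S)
    rw [List.map_map]
    refine List.map_congr_left fun o _ => ?_
    exact a.act_mul o g h

/-- The transporter set `Iso(x, y) = {g : x ^ g = y}`. -/
def iso {X : Type*} (b : RAct G X) (x y : X) : Set G := {g | b.act x g = y}

/-- A refiner for `U`: a pair of functions on stacks with
`U ∩ Iso(S, T) ⊆ Iso(f_L S, f_R T)` for all stacks `S`, `T`. -/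
def IsRefiner (a : RAct G O) (U : Set G) (fL fR : List O → List O) : Prop :=
  ∀ S T : List O, U ∩ a.stack.iso S T ⊆ a.stack.iso (fL S) (fR T)

/-- A perfect refiner for `U`: a refiner such that
`U ∩ Iso(S, T) = Iso(S ‖ f_L S, T ‖ f_R T)` whenever `|S| = |T|`. -/
def IsPerfectRefiner (a : RAct G O) (U : Set G) (fL fR : List O → List O) : Prop :=
  IsRefiner a U fL fR ∧
    ∀ S T : List O, S.length = T.length →
      U ∩ a.stack.iso S T = a.stack.iso (S ++ fL S) (T ++ fR T)

/-- The action of `x ∈ G` on functions on stacks: `f ^ x (S) = (f (S ^ x⁻¹)) ^ x`. -/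
def conj (a : RAct G O) (f : List O → List O) (x : G) : List O → List O :=
  fun S => a.stack.act (f (a.stack.act S x⁻¹)) x

/-- The combination `f ‖ g` of two functions on stacks: `(f ‖ g)(S) = f S ‖ g S`. -/
def comb (f g : List O → List O) : List O → List O := fun S => f S ++ g S

end RAct

/-- If `π : Stacks(O) → Stacks(O')` is an injective `Sym Ω`-invariant function and
`U ⊆ Sym Ω` has a perfect refiner with respect to `O`, then `U` has a perfect refiner
with respect to `O'`. -/
theorem stmt14 {Ω : Type*} [Fintype Ω] [Nonempty Ω] {O O' : Type*}
    (a : RAct (Equiv.Perm Ω) O) (a' : RAct (Equiv.Perm Ω) O')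
    (π : List O → List O') (hinj : Function.Injective π)
    (hπ : ∀ (S : List O) (g : Equiv.Perm Ω), π (a.stack.act S g) = a'.stack.act (π S) g)
    (U : Set (Equiv.Perm Ω))
    (h : ∃ fL fR : List O → List O, a.IsPerfectRefiner U fL fR) :
    ∃ fL fR : List O' → List O', a'.IsPerfectRefiner U fL fR := by
  obtain ⟨fL, fR, hr, hp⟩ := h
  -- U is exactly the transporter Iso(π (fL []), π (fR []))
  have hU : U = a'.stack.iso (π (fL [])) (π (fR [])) := by
    ext g
    constructor
    · intro hg
      have hmem : g ∈ U ∩ a.stack.iso [] [] := ⟨hg, by simp [RAct.iso, RAct.stack]⟩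
      rw [hp [] [] rfl] at hmem
      simp only [List.nil_append] at hmem
      show a'.stack.act (π (fL [])) g = π (fR [])
      rw [← hπ, hmem]
    · intro hg
      have h1 : π (a.stack.act (fL []) g) = π (fR []) := by rw [hπ]; exact hg
      have h2 : a.stack.act (fL []) g = fR [] := hinj h1
      have h3 : g ∈ a.stack.iso ([] ++ fL []) ([] ++ fR []) := by
        simpa [RAct.iso] using h2
      rw [← hp [] [] rfl] at h3
      exact h3.1
  have hlen : ∀ (S : List O') (g : Equiv.Perm Ω), (a'.stack.act S g).length = S.length := by
    intro S g; simp [RAct.stack]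
  have happ : ∀ (S T : List O') (g : Equiv.Perm Ω),
      a'.stack.act (S ++ T) g = a'.stack.act S g ++ a'.stack.act T g := by
    intro S T g; simp [RAct.stack]
  refine ⟨fun _ => π (fL []), fun _ => π (fR []), ?_, ?_⟩
  · intro S T g hg
    have := hg.1
    rwa [hU] at this
  · intro S T hST
    ext g
    constructor
    · rintro ⟨hgU, hgiso⟩
      rw [hU] at hgU
      show a'.stack.act (S ++ π (fL [])) g = T ++ π (fR [])
      rw [happ, hgiso, hgU]
    · intro hg
      have hg' : a'.stack.act S g ++ a'.stack.act (π (fL [])) g = T ++ π (fR []) := by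
        rw [← happ]; exact hg
      have hlen' : (a'.stack.act S g).length = T.length := by rw [hlen]; exact hST
      obtain ⟨h1, h2⟩ := List.append_inj hg' hlen'
      exact ⟨by rw [hU]; exact h2, h1⟩
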